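/- Let L, M be complex polynomials with deg M < deg L = ℓ and L(ik) imaginary for all real k, and define the rescaled polynomials L_c, M_c as above. Then the function R(c, x) = M_c(ix)/(1 - L_c(ix)) is uniformly bounded on [0, C₀] × ℝ for any C₀ > 0, where R is extended continuously by 0 at x = ∞. -/

import Mathlib

open Complex Finset

/-- With `L_c(X) = ∑ c^(ℓ-j) bⱼ Xʲ` and `M_c(X) = ∑ c^(ℓ-q-j) aⱼ Xʲ` (note
`ℓ - q = deg M`), the family of rational functions `R(c,x) = M_c(ix)/(1 - L_c(ix))`
is uniformly bounded on `[0, C₀] × ℝ` for any `C₀ > 0`. -/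
theorem stmt_6 (L M : Polynomial ℂ) (hdeg : M.degree < L.degree)
    (him : ∀ k : ℝ, (L.eval (Complex.I * k)).re = 0)
    (C₀ : ℝ) (hC₀ : 0 < C₀) :
    ∃ K : ℝ, ∀ c x : ℝ, 0 ≤ c → c ≤ C₀ →
      ‖(∑ j ∈ Finset.range (M.natDegree + 1),
            (c : ℂ) ^ (M.natDegree - j) * M.coeff j * (Complex.I * x) ^ j) /
          (1 - ∑ j ∈ Finset.range (L.natDegree + 1),
            (c : ℂ) ^ (L.natDegree - j) * L.coeff j * (Complex.I * x) ^ j)‖ ≤ K := by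
  classical
  have hL0 : L ≠ 0 := by
    rintro rfl
    simp only [Polynomial.degree_zero] at hdeg
    exact not_lt_bot hdeg
  set ℓ := L.natDegree with hℓdef
  set m := M.natDegree with hmdef
  have hml : m ≤ ℓ := Polynomial.natDegree_le_natDegree hdeg.le
  have hbl0 : L.coeff ℓ ≠ 0 := by
    rw [hℓdef, Polynomial.coeff_natDegree]
    exact Polynomial.leadingCoeff_ne_zero.mpr hL0
  set bl := ‖L.coeff ℓ‖ with hbldef
  have hbl : 0 < bl := norm_pos_iff.mpr hbl0
  -- purely imaginary coefficients
  have hre : ∀ j, (L.coeff j * I ^ j).re = 0 := by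
    have hP : (∑ j ∈ Finset.range (ℓ + 1),
        Polynomial.C ((L.coeff j * I ^ j).re) * Polynomial.X ^ j : Polynomial ℝ) = 0 := by
      apply Polynomial.funext
      intro k
      have h1 := him k
      rw [Polynomial.eval_eq_sum_range] at h1
      rw [Complex.re_sum] at h1
      have h2 : ∀ j ∈ Finset.range (ℓ + 1),
          (L.coeff j * (I * (k : ℂ)) ^ j).re = (L.coeff j * I ^ j).re * k ^ j := by
        intro j _
        rw [mul_pow, ← mul_assoc, ← Complex.ofReal_pow, Complex.mul_re,
          Complex.ofReal_re, Complex.ofReal_im, mul_zero, sub_zero]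
      rw [Finset.sum_congr rfl h2] at h1
      rw [Polynomial.eval_zero, Polynomial.eval_finset_sum]
      simp only [Polynomial.eval_mul, Polynomial.eval_C, Polynomial.eval_pow,
        Polynomial.eval_X]
      exact h1
    intro j
    rcases le_or_gt j ℓ with hj | hj
    · have h3 := congrArg (fun p => Polynomial.coeff p j) hP
      simp only [Polynomial.finset_sum_coeff, Polynomial.coeff_C_mul,
        Polynomial.coeff_X_pow, Polynomial.coeff_zero, mul_ite, mul_one, mul_zero] at h3
      rw [Finset.sum_ite_eq] at h3
      rwa [if_pos (Finset.mem_range.mpr (Nat.lt_succ_of_le hj))] at h3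
    · rw [Polynomial.coeff_eq_zero_of_natDegree_lt hj]
      simp
  -- the denominator sum is purely imaginary
  have hDre : ∀ c x : ℝ, (∑ j ∈ Finset.range (ℓ + 1),
      (c : ℂ) ^ (ℓ - j) * L.coeff j * (I * (x : ℂ)) ^ j).re = 0 := by
    intro c x
    rw [Complex.re_sum]
    apply Finset.sum_eq_zero
    intro j _
    have h : (c : ℂ) ^ (ℓ - j) * L.coeff j * (I * (x : ℂ)) ^ j
        = ((c ^ (ℓ - j) * x ^ j : ℝ) : ℂ) * (L.coeff j * I ^ j) := by
      push_cast
      ring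
    rw [h, Complex.re_ofReal_mul, hre j, mul_zero]
  -- denominator bounds
  have hden : ∀ z : ℂ, z.re = 0 →
      1 ≤ ‖1 - z‖ ∧ ‖z‖ ≤ ‖1 - z‖ := by
    intro z hz
    have h1 : (‖1 - z‖) ^ 2 = 1 + z.im ^ 2 := by
      rw [Complex.sq_norm, Complex.normSq_apply]
      simp [hz]
      ring
    have h2 : (‖z‖) ^ 2 = z.im ^ 2 := by
      rw [Complex.sq_norm, Complex.normSq_apply, hz]
      ring
    constructor
    · nlinarith [norm_nonneg (1 - z)]
    · nlinarith [norm_nonneg (1 - z), norm_nonneg z]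
  -- constants
  set C₁ := max 1 C₀ with hC₁def
  have hC₁1 : (1 : ℝ) ≤ C₁ := le_max_left _ _
  set A := ∑ j ∈ Finset.range (m + 1), C₁ ^ ℓ * ‖M.coeff j‖ with hAdef
  set B := ∑ j ∈ Finset.range ℓ, C₁ ^ ℓ * ‖L.coeff j‖ with hBdef
  have hA0 : 0 ≤ A := Finset.sum_nonneg fun j _ => by positivity
  have hB0 : 0 ≤ B := Finset.sum_nonneg fun j _ => by positivity
  set X₀ := max 1 (2 * B / bl) with hX₀def
  have hX₀1 : (1 : ℝ) ≤ X₀ := le_max_left _ _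
  refine ⟨max (A * X₀ ^ ℓ) (2 * A / bl), ?_⟩
  intro c x hc hcC
  have hcC₁ : c ≤ C₁ := hcC.trans (le_max_right _ _)
  have hcpow : ∀ n, n ≤ ℓ → c ^ n ≤ C₁ ^ ℓ := fun n hn =>
    (pow_le_pow_left₀ hc hcC₁ n).trans (pow_le_pow_right₀ hC₁1 hn)
  have habst : ∀ (n j : ℕ) (a : ℂ), ‖(c : ℂ) ^ n * a * (I * (x : ℂ)) ^ j‖
      = c ^ n * ‖a‖ * |x| ^ j := by
    intro n j a
    simp [norm_mul, norm_pow, Complex.norm_real, Complex.norm_I,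
      _root_.abs_of_nonneg hc]
  set N := ∑ j ∈ Finset.range (m + 1), (c : ℂ) ^ (m - j) * M.coeff j * (I * (x : ℂ)) ^ j with hN
  set D := ∑ j ∈ Finset.range (ℓ + 1), (c : ℂ) ^ (ℓ - j) * L.coeff j * (I * (x : ℂ)) ^ j with hD
  have hd1 : 1 ≤ ‖1 - D‖ := (hden D (hDre c x)).1
  have hd2 : ‖D‖ ≤ ‖1 - D‖ := (hden D (hDre c x)).2
  have hNle : ‖N‖ ≤
      ∑ j ∈ Finset.range (m + 1), C₁ ^ ℓ * ‖M.coeff j‖ * |x| ^ j := by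
    refine le_trans (norm_sum_le _ _) ?_
    apply Finset.sum_le_sum
    intro j hj
    rw [habst]
    have hcp : c ^ (m - j) ≤ C₁ ^ ℓ := hcpow _ ((Nat.sub_le _ _).trans hml)
    gcongr
  rw [norm_div]
  rcases le_or_gt |x| X₀ with hx | hx
  · -- small x
    refine le_trans (div_le_self (norm_nonneg _) hd1) ?_
    refine le_trans hNle (le_trans ?_ (le_max_left _ _))
    rw [hAdef, Finset.sum_mul]
    apply Finset.sum_le_sum
    intro j hj
    have hxj : |x| ^ j ≤ X₀ ^ ℓ :=
      (pow_le_pow_left₀ (abs_nonneg x) hx j).trans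
        (pow_le_pow_right₀ hX₀1 ((Nat.lt_succ_iff.mp (Finset.mem_range.mp hj)).trans hml))
    exact mul_le_mul_of_nonneg_left hxj (by positivity)
  · -- large x
    have hx1 : (1 : ℝ) ≤ |x| := hX₀1.trans hx.le
    have hxpos : (0 : ℝ) < |x| := lt_of_lt_of_le one_pos hx1
    have hBx : B ≤ bl / 2 * |x| := by
      have h := (le_max_right 1 (2 * B / bl)).trans hx.le
      rw [div_le_iff₀ hbl] at h
      nlinarith
    have hNle2 : ‖N‖ ≤ A * |x| ^ ℓ := by
      refine le_trans hNle ?_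
      rw [hAdef, Finset.sum_mul]
      apply Finset.sum_le_sum
      intro j hj
      exact mul_le_mul_of_nonneg_left
        (pow_le_pow_right₀ hx1 ((Nat.lt_succ_iff.mp (Finset.mem_range.mp hj)).trans hml))
        (by positivity)
    -- denominator lower bound
    have htail : ‖∑ j ∈ Finset.range ℓ,
        (c : ℂ) ^ (ℓ - j) * L.coeff j * (I * (x : ℂ)) ^ j‖ ≤ bl / 2 * |x| ^ ℓ := by
      have hS : ‖∑ j ∈ Finset.range ℓ,
          (c : ℂ) ^ (ℓ - j) * L.coeff j * (I * (x : ℂ)) ^ j‖ ≤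
          ∑ j ∈ Finset.range ℓ, C₁ ^ ℓ * ‖L.coeff j‖ * |x| ^ j := by
        refine le_trans (norm_sum_le _ _) ?_
        apply Finset.sum_le_sum
        intro j hj
        rw [habst]
        have : c ^ (ℓ - j) ≤ C₁ ^ ℓ := hcpow _ (Nat.sub_le _ _)
        gcongr
      refine hS.trans ?_
      have hmul : (∑ j ∈ Finset.range ℓ, C₁ ^ ℓ * ‖L.coeff j‖ * |x| ^ j) * |x|
          ≤ (bl / 2 * |x| ^ ℓ) * |x| := by
        rw [Finset.sum_mul]
        calc ∑ j ∈ Finset.range ℓ, C₁ ^ ℓ * ‖L.coeff j‖ * |x| ^ j * |x|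
            ≤ ∑ j ∈ Finset.range ℓ, C₁ ^ ℓ * ‖L.coeff j‖ * |x| ^ ℓ := by
              apply Finset.sum_le_sum
              intro j hj
              rw [mul_assoc, ← pow_succ]
              exact mul_le_mul_of_nonneg_left
                (pow_le_pow_right₀ hx1 (Finset.mem_range.mp hj)) (by positivity)
          _ = B * |x| ^ ℓ := by rw [hBdef, Finset.sum_mul]
          _ ≤ (bl / 2 * |x|) * |x| ^ ℓ := by gcongr
          _ = (bl / 2 * |x| ^ ℓ) * |x| := by ring
      exact le_of_mul_le_mul_right hmul hxpos
    have hsplit : D = (∑ j ∈ Finset.range ℓ,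
        (c : ℂ) ^ (ℓ - j) * L.coeff j * (I * (x : ℂ)) ^ j)
        + (c : ℂ) ^ (ℓ - ℓ) * L.coeff ℓ * (I * (x : ℂ)) ^ ℓ := Finset.sum_range_succ _ _
    have habsT : ‖(c : ℂ) ^ (ℓ - ℓ) * L.coeff ℓ * (I * (x : ℂ)) ^ ℓ‖
        = bl * |x| ^ ℓ := by
      rw [habst, Nat.sub_self, pow_zero, one_mul]
    have hDlow : bl / 2 * |x| ^ ℓ ≤ ‖D‖ := by
      set t := ∑ j ∈ Finset.range ℓ, (c : ℂ) ^ (ℓ - j) * L.coeff j * (I * (x : ℂ)) ^ j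
      set T := (c : ℂ) ^ (ℓ - ℓ) * L.coeff ℓ * (I * (x : ℂ)) ^ ℓ
      have h5 : ‖T‖ ≤ ‖t + T‖ + ‖t‖ := by
        have h6 := norm_sub_norm_le T (-t)
        rw [sub_neg_eq_add, norm_neg, add_comm T t] at h6
        simpa using h6
      rw [hsplit]
      rw [habsT] at h5
      nlinarith [htail]
    have hdlow2 : bl / 2 * |x| ^ ℓ ≤ ‖1 - D‖ := hDlow.trans hd2
    have hpos : (0 : ℝ) < bl / 2 * |x| ^ ℓ := by positivity
    have hsimp : ∀ a b y : ℝ, 0 < b → 0 < y → (a * y) / (b / 2 * y) = 2 * a / b := by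
      intro a b y hb hy
      field_simp
    have hfin : ‖N‖ / ‖1 - D‖ ≤ (A * |x| ^ ℓ) / (bl / 2 * |x| ^ ℓ) :=
      div_le_div₀ (mul_nonneg hA0 (pow_nonneg (abs_nonneg x) ℓ)) hNle2 hpos hdlow2
    refine hfin.trans ?_
    rw [hsimp A bl (|x| ^ ℓ) hbl (pow_pos hxpos ℓ)]
    exact le_max_right _ _
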